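/- Let p be an odd prime, v₁ = (1/2, 0, 0, 0, 1) ∈ ℚ_p⁵, and for r ∈ ℕ let d_r = diag(p^r, 1, 1, 1, p^{−r}). Let x = (x₁,…,x₅) ∈ ℚ_p⁵ satisfy 2x₁x₅ + 2x₂x₄ + x₃² = 1. Then for every r ∈ ℕ: there exists k ∈ K with k·(d_r·v₁) = x if and only if max_{1≤i≤5} ‖x_i‖ = p^r. Consequently every point of the sphere {v ∈ ℚ_p⁵ : 2v₁v₅ + 2v₂v₄ + v₃² = 1} lies in exactly one K-orbit K·(d_r·v₁), r ≥ 0. -/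

import Mathlib

open Matrix

noncomputable section

set_option maxHeartbeats 1000000

variable (p : ℕ) [Fact p.Prime]

/-- The 5×5 matrix `J` over `ℚ_p`. -/
def J5 : Matrix (Fin 5) (Fin 5) ℚ_[p] :=
  Matrix.of fun i j => if (i : ℕ) + (j : ℕ) = 4 then 1 else 0

/-- The maximal compact subgroup `K = SO(3,2;ℤ_p)` of `G`. -/
def Kgp : Set (Matrix (Fin 5) (Fin 5) ℚ_[p]) :=
  {g | gᵀ * J5 p * g = J5 p ∧ g.det = 1 ∧ ∀ i j, ‖g i j‖ ≤ 1}

/-- The matrix `d_r = diag(p^r, 1, 1, 1, p^{−r})`. -/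
def dmat (r : ℕ) : Matrix (Fin 5) (Fin 5) ℚ_[p] :=
  Matrix.diagonal ![(p : ℚ_[p]) ^ r, 1, 1, 1, ((p : ℚ_[p]) ^ r)⁻¹]

/-! ### Auxiliary material -/

namespace Stmt6Aux

variable {p}

lemma J5_eq : J5 p = !![0,0,0,0,1; 0,0,0,1,0; 0,0,1,0,0; 0,1,0,0,0; 1,0,0,0,0] := by
  ext i j
  fin_cases i <;> fin_cases j <;> rfl

lemma norm_two (hp : p ≠ 2) : ‖(2 : ℚ_[p])‖ = 1 := by
  have h2 : (((2:ℤ)) : ℚ_[p]) = 2 := by norm_num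
  refine le_antisymm (by simpa [h2] using Padic.norm_int_le_one (p := p) 2) ?_
  by_contra h
  push_neg at h
  have hdvd : (p:ℤ) ∣ 2 := (PadicInt.norm_int_lt_one_iff_dvd (p := p) 2).1 (by rw [PadicInt.norm_def]; exact lt_of_eq_of_lt (by norm_cast) h)
  have hdvd' : p ∣ 2 := by exact_mod_cast hdvd
  exact hp ((Nat.prime_dvd_prime_iff_eq Fact.out Nat.prime_two).1 hdvd')

lemma norm_sum_le {C : ℝ} (hC : 0 ≤ C) :
    ∀ {n : ℕ} (f : Fin n → ℚ_[p]), (∀ i, ‖f i‖ ≤ C) → ‖∑ i, f i‖ ≤ C := by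
  intro n
  induction n with
  | zero => intro f _; simpa using hC
  | succ n ih =>
    intro f h
    rw [Fin.sum_univ_succ]
    exact le_trans (Padic.nonarchimedean _ _)
      (max_le (h 0) (ih _ fun i => h i.succ))

lemma entries_mulVec_le {g : Matrix (Fin 5) (Fin 5) ℚ_[p]} {v : Fin 5 → ℚ_[p]} {C : ℝ}
    (hg : ∀ i j, ‖g i j‖ ≤ 1) (hv : ∀ j, ‖v j‖ ≤ C) (hC : 0 ≤ C) :
    ∀ i, ‖g.mulVec v i‖ ≤ C := by
  intro i
  show ‖∑ j, g i j * v j‖ ≤ C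
  refine norm_sum_le hC _ fun j => ?_
  calc ‖g i j * v j‖ = ‖g i j‖ * ‖v j‖ := norm_mul _ _
    _ ≤ 1 * C := mul_le_mul (hg i j) (hv j) (norm_nonneg _) zero_le_one
    _ = C := one_mul C

lemma mul_mem {g h : Matrix (Fin 5) (Fin 5) ℚ_[p]} (hg : g ∈ Kgp p) (hh : h ∈ Kgp p) :
    g * h ∈ Kgp p := by
  obtain ⟨hg1, hg2, hg3⟩ := hg
  obtain ⟨hh1, hh2, hh3⟩ := hh
  refine ⟨?_, ?_, ?_⟩
  · rw [Matrix.transpose_mul]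
    calc hᵀ * gᵀ * J5 p * (g * h) = hᵀ * (gᵀ * J5 p * g) * h := by
          simp only [Matrix.mul_assoc]
      _ = hᵀ * J5 p * h := by rw [hg1, Matrix.mul_assoc]
      _ = J5 p := hh1
  · rw [Matrix.det_mul, hg2, hh2, one_mul]
  · intro i j
    rw [Matrix.mul_apply]
    refine norm_sum_le zero_le_one _ fun k => ?_
    calc ‖g i k * h k j‖ = ‖g i k‖ * ‖h k j‖ := norm_mul _ _
      _ ≤ 1 * 1 := mul_le_mul (hg3 i k) (hh3 k j) (norm_nonneg _) zero_le_one
      _ = 1 := one_mul 1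

lemma J5_mem : J5 p ∈ Kgp p := by
  refine ⟨?_, ?_, ?_⟩
  · rw [J5_eq]
    ext i j
    fin_cases i <;> fin_cases j <;>
      simp [Matrix.mul_apply, Fin.sum_univ_succ, Matrix.vecHead, Matrix.vecTail]
  · rw [J5_eq]
    simp (config := { decide := true }) [Matrix.det_succ_row_zero, Fin.sum_univ_succ,
      Fin.succAbove, Fin.castSucc, Fin.castAdd, Fin.castLE, Fin.succ,
      Matrix.vecHead, Matrix.vecTail]
    try norm_num
  · intro i j
    rw [J5_eq]
    fin_cases i <;> fin_cases j <;>
      simp [Matrix.vecHead, Matrix.vecTail]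

lemma JJ : J5 p * J5 p = 1 := by
  rw [J5_eq]
  ext i j
  fin_cases i <;> fin_cases j <;>
    simp [Matrix.mul_apply, Fin.sum_univ_succ, Matrix.vecHead, Matrix.vecTail,
      Matrix.one_apply]

lemma exists_inv {g : Matrix (Fin 5) (Fin 5) ℚ_[p]} (hg : g ∈ Kgp p) :
    ∃ h ∈ Kgp p, g * h = 1 ∧ h * g = 1 := by
  obtain ⟨hg1, hg2, hg3⟩ := hg
  have hhg : (J5 p * gᵀ * J5 p) * g = 1 := by
    calc (J5 p * gᵀ * J5 p) * g = J5 p * (gᵀ * J5 p * g) := by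
          simp only [Matrix.mul_assoc]
      _ = 1 := by rw [hg1, JJ]
  have hgh : g * (J5 p * gᵀ * J5 p) = 1 := mul_eq_one_comm.2 hhg
  have hgJ : gᵀᵀ * J5 p * gᵀ = J5 p := by
    rw [Matrix.transpose_transpose]
    have h1 : g * (J5 p * gᵀ * J5 p) * J5 p = 1 * J5 p := by rw [hgh]
    rw [one_mul] at h1
    calc g * J5 p * gᵀ = g * (J5 p * gᵀ * J5 p) * J5 p := by
          simp only [Matrix.mul_assoc, JJ, Matrix.mul_one]
      _ = J5 p := h1
  have hT : gᵀ ∈ Kgp p :=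
    ⟨hgJ, by rw [Matrix.det_transpose, hg2], fun i j => hg3 j i⟩
  exact ⟨J5 p * gᵀ * J5 p, mul_mem (mul_mem J5_mem hT) J5_mem, hgh, hhg⟩

lemma J5_mulVec (v : Fin 5 → ℚ_[p]) :
    (J5 p).mulVec v = ![v 4, v 3, v 2, v 1, v 0] := by
  rw [J5_eq]
  funext i
  fin_cases i <;>
    simp [Matrix.mulVec, dotProduct, Fin.sum_univ_five]

lemma Qdot (v : Fin 5 → ℚ_[p]) :
    2*v 0*v 4 + 2*v 1*v 3 + (v 2)^2 = v ⬝ᵥ (J5 p).mulVec v := by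
  rw [J5_mulVec]
  simp only [dotProduct, Fin.sum_univ_five, Matrix.cons_val_zero, Matrix.cons_val_one,
    Matrix.head_cons, Matrix.cons_val_two, Matrix.tail_cons, Matrix.cons_val_three,
    Matrix.cons_val_four]
  ring

lemma Q_mulVec {g : Matrix (Fin 5) (Fin 5) ℚ_[p]} (hg : g ∈ Kgp p) (v : Fin 5 → ℚ_[p]) :
    2 * g.mulVec v 0 * g.mulVec v 4 + 2 * g.mulVec v 1 * g.mulVec v 3 + (g.mulVec v 2)^2
      = 2*v 0*v 4 + 2*v 1*v 3 + (v 2)^2 := by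
  rw [Qdot, Qdot]
  calc g.mulVec v ⬝ᵥ (J5 p).mulVec (g.mulVec v)
      = g.mulVec v ⬝ᵥ (J5 p * g).mulVec v := by rw [Matrix.mulVec_mulVec]
    _ = Matrix.vecMul (g.mulVec v) (J5 p * g) ⬝ᵥ v := by rw [dotProduct_mulVec]
    _ = Matrix.vecMul (Matrix.vecMul v gᵀ) (J5 p * g) ⬝ᵥ v := by
          rw [← Matrix.vecMul_transpose]
    _ = Matrix.vecMul v (gᵀ * (J5 p * g)) ⬝ᵥ v := by rw [Matrix.vecMul_vecMul]
    _ = Matrix.vecMul v (J5 p) ⬝ᵥ v := by rw [← Matrix.mul_assoc, hg.1]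
    _ = v ⬝ᵥ (J5 p).mulVec v := (dotProduct_mulVec _ _ _).symm

/-- A permutation matrix swapping the two hyperbolic planes. -/
def Pmat : Matrix (Fin 5) (Fin 5) ℚ_[p] :=
  !![0,1,0,0,0; 1,0,0,0,0; 0,0,1,0,0; 0,0,0,0,1; 0,0,0,1,0]

lemma Pmat_mulVec (v : Fin 5 → ℚ_[p]) :
    (Pmat : Matrix (Fin 5) (Fin 5) ℚ_[p]).mulVec v = ![v 1, v 0, v 2, v 4, v 3] := by
  funext i
  fin_cases i <;>
    simp [Pmat, Matrix.mulVec, dotProduct, Fin.sum_univ_five]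

set_option maxHeartbeats 1000000 in
lemma Pmat_mem : (Pmat : Matrix (Fin 5) (Fin 5) ℚ_[p]) ∈ Kgp p := by
  refine ⟨?_, ?_, ?_⟩
  · rw [J5_eq]
    ext i j
    fin_cases i <;> fin_cases j <;>
      simp [Pmat, Matrix.mul_apply, Fin.sum_univ_succ, Matrix.vecHead, Matrix.vecTail]
  · simp (config := { decide := true }) [Pmat, Matrix.det_succ_row_zero, Fin.sum_univ_succ,
      Fin.succAbove, Fin.castSucc, Fin.castAdd, Fin.castLE, Fin.succ,
      Matrix.vecHead, Matrix.vecTail]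
    try norm_num
  · intro i j
    fin_cases i <;> fin_cases j <;>
      simp [Pmat, Matrix.vecHead, Matrix.vecTail]

/-- The diagonal matrix `diag(u,1,1,1,u⁻¹)`. -/
def Dmat (u : ℚ_[p]) : Matrix (Fin 5) (Fin 5) ℚ_[p] :=
  !![u,0,0,0,0; 0,1,0,0,0; 0,0,1,0,0; 0,0,0,1,0; 0,0,0,0,u⁻¹]

lemma Dmat_mulVec (u : ℚ_[p]) (v : Fin 5 → ℚ_[p]) :
    (Dmat u).mulVec v = ![u * v 0, v 1, v 2, v 3, u⁻¹ * v 4] := by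
  funext i
  fin_cases i <;>
    simp [Dmat, Matrix.mulVec, dotProduct, Fin.sum_univ_five]

set_option maxHeartbeats 1000000 in
lemma Dmat_mem {u : ℚ_[p]} (hu : ‖u‖ = 1) : Dmat u ∈ Kgp p := by
  have hu0 : u ≠ 0 := by
    intro h; rw [h] at hu; simp at hu
  refine ⟨?_, ?_, ?_⟩
  · rw [J5_eq]
    ext i j
    fin_cases i <;> fin_cases j <;>
      simp [Dmat, Matrix.mul_apply, Fin.sum_univ_succ, Matrix.vecHead, Matrix.vecTail] <;>
      field_simp
  · simp (config := { decide := true }) [Dmat, Matrix.det_succ_row_zero, Fin.sum_univ_succ,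
      Fin.succAbove, Fin.castSucc, Fin.castAdd, Fin.castLE, Fin.succ,
      Matrix.vecHead, Matrix.vecTail]
    field_simp
  · intro i j
    fin_cases i <;> fin_cases j <;>
      simp [Dmat, Matrix.vecHead, Matrix.vecTail, hu, norm_inv]

/-- An integral Eichler transvection (lower triangular). -/
def Emat (a b c : ℚ_[p]) : Matrix (Fin 5) (Fin 5) ℚ_[p] :=
  !![1,0,0,0,0; -a,1,0,0,0; -b,0,1,0,0; -c,0,0,1,0; -(a*c+b^2/2), c, b, a, 1]

lemma Emat_mulVec (a b c : ℚ_[p]) (v : Fin 5 → ℚ_[p]) :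
    (Emat a b c).mulVec v = ![v 0, v 1 - a * v 0, v 2 - b * v 0, v 3 - c * v 0,
      v 4 - (a*c+b^2/2) * v 0 + c * v 1 + b * v 2 + a * v 3] := by
  funext i
  fin_cases i <;>
    simp [Emat, Matrix.mulVec, dotProduct, Fin.sum_univ_five] <;> ring

set_option maxHeartbeats 1000000 in
lemma Emat_mem {a b c : ℚ_[p]} (ha : ‖a‖ ≤ 1) (hb : ‖b‖ ≤ 1) (hc : ‖c‖ ≤ 1)
    (habc : ‖a*c + b^2/2‖ ≤ 1) : Emat a b c ∈ Kgp p := by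
  refine ⟨?_, ?_, ?_⟩
  · rw [J5_eq]
    ext i j
    fin_cases i <;> fin_cases j <;>
      simp [Emat, Matrix.mul_apply, Fin.sum_univ_succ, Matrix.vecHead, Matrix.vecTail] <;>
      ring
  · simp (config := { decide := true }) [Emat, Matrix.det_succ_row_zero, Fin.sum_univ_succ,
      Fin.succAbove, Fin.castSucc, Fin.castAdd, Fin.castLE, Fin.succ,
      Matrix.vecHead, Matrix.vecTail]
  · intro i j
    fin_cases i <;> fin_cases j <;>
      simp [Emat, Matrix.vecHead, Matrix.vecTail] <;>
      first
        | assumption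
        | (rw [show -(b ^ 2 / 2) + -(a * c) = -(a * c + b ^ 2 / 2) from by ring, norm_neg]
           exact habc)

set_option maxHeartbeats 1000000 in
lemma reduce0 (hp : p ≠ 2) (y : Fin 5 → ℚ_[p]) (h0 : ‖y 0‖ = 1) (hle : ∀ i, ‖y i‖ ≤ 1) :
    ∃ g ∈ Kgp p, g.mulVec y = ![(2*y 0*y 4 + 2*y 1*y 3 + (y 2)^2)/2, 0, 0, 0, 1] := by
  have hy0 : y 0 ≠ 0 := by
    intro h; rw [h] at h0; simp at h0
  have hnd : ∀ i : Fin 5, ‖y i / y 0‖ ≤ 1 := by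
    intro i
    rw [norm_div, h0, div_one]; exact hle i
  obtain ⟨a, hA, hna⟩ : ∃ a, y 1 = a * y 0 ∧ ‖a‖ ≤ 1 :=
    ⟨y 1 / y 0, (div_mul_cancel₀ _ hy0).symm, hnd 1⟩
  obtain ⟨b, hB, hnb⟩ : ∃ b, y 2 = b * y 0 ∧ ‖b‖ ≤ 1 :=
    ⟨y 2 / y 0, (div_mul_cancel₀ _ hy0).symm, hnd 2⟩
  obtain ⟨c, hC, hnc⟩ : ∃ c, y 3 = c * y 0 ∧ ‖c‖ ≤ 1 :=
    ⟨y 3 / y 0, (div_mul_cancel₀ _ hy0).symm, hnd 3⟩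
  have habc : ‖a * c + b^2/2‖ ≤ 1 := by
    refine le_trans (Padic.nonarchimedean _ _) (max_le ?_ ?_)
    · rw [norm_mul]
      exact mul_le_one₀ hna (norm_nonneg _) hnc
    · rw [norm_div, norm_two hp, div_one, norm_pow]
      exact pow_le_one₀ (norm_nonneg _) hnb
  have hE : Emat a b c ∈ Kgp p := Emat_mem hna hnb hnc habc
  have hD : Dmat (y 0) ∈ Kgp p := Dmat_mem h0
  refine ⟨Dmat (y 0) * (J5 p * Emat a b c),
    mul_mem hD (mul_mem J5_mem hE), ?_⟩
  rw [← Matrix.mulVec_mulVec, ← Matrix.mulVec_mulVec, Emat_mulVec, J5_mulVec, Dmat_mulVec]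
  funext i
  fin_cases i <;> simp <;>
    first
      | (simp only [hA, hB, hC]; ring)
      | exact inv_mul_cancel₀ hy0

lemma step (hp : p ≠ 2) {g₀ : Matrix (Fin 5) (Fin 5) ℚ_[p]} (hg₀ : g₀ ∈ Kgp p)
    (y : Fin 5 → ℚ_[p]) (hle : ∀ i, ‖y i‖ ≤ 1) (h0 : ‖g₀.mulVec y 0‖ = 1) :
    ∃ g ∈ Kgp p, g.mulVec y = ![(2*y 0*y 4 + 2*y 1*y 3 + (y 2)^2)/2, 0, 0, 0, 1] := by
  have hle' : ∀ i, ‖g₀.mulVec y i‖ ≤ 1 :=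
    entries_mulVec_le hg₀.2.2 hle zero_le_one
  obtain ⟨g₁, hg₁, hact⟩ := reduce0 hp (g₀.mulVec y) h0 hle'
  refine ⟨g₁ * g₀, mul_mem hg₁ hg₀, ?_⟩
  rw [← Matrix.mulVec_mulVec, hact, Q_mulVec hg₀]

set_option maxHeartbeats 1000000 in
lemma exists_reduce (hp : p ≠ 2) (y : Fin 5 → ℚ_[p]) (hle : ∀ i, ‖y i‖ ≤ 1)
    (hex : ∃ i, ‖y i‖ = 1) :
    ∃ g ∈ Kgp p, g.mulVec y = ![(2*y 0*y 4 + 2*y 1*y 3 + (y 2)^2)/2, 0, 0, 0, 1] := by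
  by_cases h0 : ‖y 0‖ = 1
  · exact reduce0 hp y h0 hle
  by_cases h4 : ‖y 4‖ = 1
  · exact step hp J5_mem y hle (by rw [J5_mulVec]; simpa using h4)
  by_cases h1 : ‖y 1‖ = 1
  · exact step hp Pmat_mem y hle (by rw [Pmat_mulVec]; simpa using h1)
  by_cases h3 : ‖y 3‖ = 1
  · refine step hp (mul_mem Pmat_mem J5_mem) y hle ?_
    rw [← Matrix.mulVec_mulVec, J5_mulVec, Pmat_mulVec]
    simpa using h3
  · have h2 : ‖y 2‖ = 1 := by
      obtain ⟨i, hi⟩ := hex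
      fin_cases i <;> simp_all
    have hE : Emat (0:ℚ_[p]) 1 0 ∈ Kgp p := by
      refine Emat_mem (by simp) (by simp) (by simp) ?_
      rw [show (0:ℚ_[p])*0 + (1:ℚ_[p])^2/2 = 2⁻¹ by ring]
      rw [norm_inv, norm_two hp]
      norm_num
    refine step hp (mul_mem J5_mem hE) y hle ?_
    rw [← Matrix.mulVec_mulVec, Emat_mulVec, J5_mulVec]
    simp only [Matrix.cons_val_zero, Matrix.cons_val_one, Matrix.head_cons,
      Matrix.cons_val_two, Matrix.tail_cons, Matrix.cons_val_three, Matrix.cons_val_four]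
    rw [show y 4 - ((0:ℚ_[p])*0+(1:ℚ_[p])^2/2) * y 0 + 0 * y 1 + 1 * y 2 + 0 * y 3
        = y 2 + (y 4 - 2⁻¹ * y 0) from by ring]
    have hsmall : ‖y 4 - 2⁻¹ * y 0‖ < 1 := by
      refine lt_of_le_of_lt (le_trans (le_of_eq (by rw [sub_eq_add_neg]))
        (Padic.nonarchimedean _ _)) ?_
      refine max_lt (lt_of_le_of_ne (hle 4) h4) ?_
      rw [norm_neg, norm_mul, norm_inv, norm_two hp, inv_one, one_mul]
      exact lt_of_le_of_ne (hle 0) h0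
    rw [Padic.add_eq_max_of_ne (by rw [h2]; exact fun h => absurd h.symm (ne_of_lt hsmall)),
      h2]
    exact max_eq_left hsmall.le

end Stmt6Aux

/-- split case: a point `x` of the sphere `Q(v,v) = 1` lies in the
`K`-orbit of `d_r·v₁` (with `v₁ = (1/2,0,0,0,1)`) iff `max ‖x_i‖ = p^r`;
consequently `x` lies in exactly one orbit `K·(d_r·v₁)`. -/
theorem stmt_6 (hp : p ≠ 2) (x : Fin 5 → ℚ_[p])
    (hx : 2 * x 0 * x 4 + 2 * x 1 * x 3 + (x 2) ^ 2 = 1) :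
    (∀ r : ℕ,
      (∃ k ∈ Kgp p, k.mulVec ((dmat p r).mulVec ![1/2, 0, 0, 0, 1]) = x) ↔
      ((∀ i, ‖x i‖ ≤ (p : ℝ) ^ r) ∧ ∃ i, ‖x i‖ = (p : ℝ) ^ r))
    ∧ ∃! r : ℕ, ∃ k ∈ Kgp p, k.mulVec ((dmat p r).mulVec ![1/2, 0, 0, 0, 1]) = x := by
  have pp : p.Prime := Fact.out
  have hp1 : (1:ℝ) < p := by exact_mod_cast pp.one_lt
  have hp0 : (0:ℝ) < p := lt_trans one_pos hp1
  have hpQ : (p:ℚ_[p]) ≠ 0 := Nat.cast_ne_zero.2 pp.ne_zero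
  have hdv : ∀ r : ℕ, (dmat p r).mulVec ![1/2, 0, 0, 0, 1]
      = ![(p:ℚ_[p])^r * (1/2), 0, 0, 0, ((p:ℚ_[p])^r)⁻¹] := by
    intro r
    funext i
    fin_cases i <;> simp [dmat, Matrix.mulVec_diagonal]
  have hnormp : ∀ r : ℕ, ‖(p:ℚ_[p])^r‖ = ((p:ℝ)^r)⁻¹ := by
    intro r
    rw [Padic.norm_p_pow, _root_.zpow_neg, zpow_natCast]
  have hnormpinv : ∀ r : ℕ, ‖((p:ℚ_[p])^r)⁻¹‖ = (p:ℝ)^r := by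
    intro r
    rw [norm_inv, hnormp, inv_inv]
  have forward : ∀ r : ℕ,
      (∃ k ∈ Kgp p, k.mulVec ((dmat p r).mulVec ![1/2, 0, 0, 0, 1]) = x) →
      ((∀ i, ‖x i‖ ≤ (p : ℝ) ^ r) ∧ ∃ i, ‖x i‖ = (p : ℝ) ^ r) := by
    rintro r ⟨k, hk, hkx⟩
    have hpr0 : (0:ℝ) < (p:ℝ)^r := pow_pos hp0 r
    have h1pr : (1:ℝ) ≤ (p:ℝ)^r := one_le_pow₀ hp1.le
    have hvle : ∀ j, ‖((dmat p r).mulVec ![1/2, 0, 0, 0, 1]) j‖ ≤ (p:ℝ)^r := by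
      intro j
      rw [hdv r]
      fin_cases j
      · show ‖(p:ℚ_[p])^r * (1/2)‖ ≤ (p:ℝ)^r
        rw [norm_mul, hnormp r,
          show ‖(1/2 : ℚ_[p])‖ = 1 by
            rw [show (1/2 : ℚ_[p]) = 2⁻¹ by ring, norm_inv, Stmt6Aux.norm_two hp, inv_one],
          mul_one]
        exact le_trans (inv_le_one_of_one_le₀ h1pr) h1pr
      · show ‖(0:ℚ_[p])‖ ≤ (p:ℝ)^r
        rw [norm_zero]; exact hpr0.le
      · show ‖(0:ℚ_[p])‖ ≤ (p:ℝ)^r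
        rw [norm_zero]; exact hpr0.le
      · show ‖(0:ℚ_[p])‖ ≤ (p:ℝ)^r
        rw [norm_zero]; exact hpr0.le
      · show ‖((p:ℚ_[p])^r)⁻¹‖ ≤ (p:ℝ)^r
        rw [hnormpinv r]
    have hxle : ∀ i, ‖x i‖ ≤ (p:ℝ)^r := by
      intro i
      rw [← hkx]
      exact Stmt6Aux.entries_mulVec_le hk.2.2 hvle hpr0.le i
    refine ⟨hxle, ?_⟩
    obtain ⟨h, hhK, -, hhg⟩ := Stmt6Aux.exists_inv hk
    have hhx : h.mulVec x = (dmat p r).mulVec ![1/2, 0, 0, 0, 1] := by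
      rw [← hkx, Matrix.mulVec_mulVec, hhg, Matrix.one_mulVec]
    obtain ⟨i₀, -, hi₀⟩ := Finset.exists_mem_eq_sup'
      (⟨0, Finset.mem_univ 0⟩ : (Finset.univ : Finset (Fin 5)).Nonempty) (fun i => ‖x i‖)
    have hCle : ∀ j, ‖x j‖ ≤ ‖x i₀‖ := by
      intro j
      rw [← hi₀]
      exact Finset.le_sup' (fun i => ‖x i‖) (Finset.mem_univ j)
    have hge : (p:ℝ)^r ≤ ‖x i₀‖ := by
      have h4 := Stmt6Aux.entries_mulVec_le hhK.2.2 hCle (norm_nonneg _) 4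
      rw [hhx, hdv r] at h4
      have h4' : ‖((p:ℚ_[p])^r)⁻¹‖ ≤ ‖x i₀‖ := h4
      rw [hnormpinv r] at h4'
      exact h4'
    exact ⟨i₀, le_antisymm (hxle i₀) hge⟩
  have backward : ∀ r : ℕ,
      ((∀ i, ‖x i‖ ≤ (p : ℝ) ^ r) ∧ ∃ i, ‖x i‖ = (p : ℝ) ^ r) →
      (∃ k ∈ Kgp p, k.mulVec ((dmat p r).mulVec ![1/2, 0, 0, 0, 1]) = x) := by
    rintro r ⟨hle, i₁, hi₁⟩
    have hpr0 : (0:ℝ) < (p:ℝ)^r := pow_pos hp0 r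
    have hprQ : ((p:ℚ_[p])^r) ≠ 0 := pow_ne_zero _ hpQ
    obtain ⟨y, hy⟩ : ∃ y : Fin 5 → ℚ_[p], y = fun i => (p:ℚ_[p])^r * x i := ⟨_, rfl⟩
    have hyc : ∀ i, y i = (p:ℚ_[p])^r * x i := fun i => by rw [hy]
    have hyle : ∀ i, ‖y i‖ ≤ 1 := by
      intro i
      rw [hyc i, norm_mul, hnormp r]
      calc ((p:ℝ)^r)⁻¹ * ‖x i‖ ≤ ((p:ℝ)^r)⁻¹ * (p:ℝ)^r :=
            mul_le_mul_of_nonneg_left (hle i) (inv_nonneg.2 hpr0.le)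
        _ = 1 := inv_mul_cancel₀ (ne_of_gt hpr0)
    have hyone : ∃ i, ‖y i‖ = 1 := by
      refine ⟨i₁, ?_⟩
      rw [hyc i₁, norm_mul, hnormp r, hi₁]
      exact inv_mul_cancel₀ (ne_of_gt hpr0)
    have hQy : 2*y 0*y 4 + 2*y 1*y 3 + (y 2)^2 = ((p:ℚ_[p])^r)^2 := by
      rw [hyc 0, hyc 1, hyc 2, hyc 3, hyc 4]
      calc 2*((p:ℚ_[p])^r * x 0)*((p:ℚ_[p])^r * x 4)
            + 2*((p:ℚ_[p])^r * x 1)*((p:ℚ_[p])^r * x 3) + ((p:ℚ_[p])^r * x 2)^2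
          = ((p:ℚ_[p])^r)^2 * (2 * x 0 * x 4 + 2 * x 1 * x 3 + (x 2)^2) := by ring
        _ = ((p:ℚ_[p])^r)^2 := by rw [hx, mul_one]
    obtain ⟨g, hgK, hgy⟩ := Stmt6Aux.exists_reduce hp y hyle hyone
    rw [hQy] at hgy
    obtain ⟨h, hhK, -, hhg⟩ := Stmt6Aux.exists_inv hgK
    refine ⟨h, hhK, ?_⟩
    have hcan : (dmat p r).mulVec ![1/2, 0, 0, 0, 1]
        = ((p:ℚ_[p])^r)⁻¹ • ![((p:ℚ_[p])^r)^2/2, 0, 0, 0, 1] := by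
      rw [hdv r]
      funext i
      fin_cases i <;> simp [smul_eq_mul] <;> field_simp <;> ring
    rw [hcan, Matrix.mulVec_smul, ← hgy, Matrix.mulVec_mulVec, hhg, Matrix.one_mulVec]
    funext i
    rw [Pi.smul_apply, hyc i, smul_eq_mul, ← mul_assoc, inv_mul_cancel₀ hprQ, one_mul]
  refine ⟨fun r => ⟨forward r, backward r⟩, ?_⟩
  obtain ⟨i₀, -, hi₀⟩ := Finset.exists_mem_eq_sup'
    (⟨0, Finset.mem_univ 0⟩ : (Finset.univ : Finset (Fin 5)).Nonempty) (fun i => ‖x i‖)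
  have hCle : ∀ j, ‖x j‖ ≤ ‖x i₀‖ := by
    intro j
    rw [← hi₀]
    exact Finset.le_sup' (fun i => ‖x i‖) (Finset.mem_univ j)
  have hC0 : (0:ℝ) ≤ ‖x i₀‖ := norm_nonneg _
  have hC1 : (1:ℝ) ≤ ‖x i₀‖ := by
    have hb : ‖(1:ℚ_[p])‖ ≤ ‖x i₀‖ * ‖x i₀‖ := by
      rw [← hx]
      refine le_trans (Padic.nonarchimedean _ _)
        (max_le (le_trans (Padic.nonarchimedean _ _) (max_le ?_ ?_)) ?_)
      · rw [norm_mul, norm_mul, Stmt6Aux.norm_two hp, one_mul]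
        exact mul_le_mul (hCle 0) (hCle 4) (norm_nonneg _) hC0
      · rw [norm_mul, norm_mul, Stmt6Aux.norm_two hp, one_mul]
        exact mul_le_mul (hCle 1) (hCle 3) (norm_nonneg _) hC0
      · rw [norm_pow, sq]
        exact mul_le_mul (hCle 2) (hCle 2) (norm_nonneg _) hC0
    rw [norm_one] at hb
    nlinarith
  have hx0 : x i₀ ≠ 0 := by
    intro h
    rw [h, norm_zero] at hC1
    linarith
  have hval : ‖x i₀‖ = (p:ℝ) ^ (-(x i₀).valuation) := Padic.norm_eq_zpow_neg_valuation hx0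
  have hvpos : 0 ≤ -(x i₀).valuation := by
    by_contra hneg
    push_neg at hneg
    have hlt : (p:ℝ) ^ (-(x i₀).valuation) < 1 := zpow_lt_one_of_neg₀ hp1 hneg
    rw [← hval] at hlt
    linarith
  have hCr : ‖x i₀‖ = (p:ℝ) ^ ((-(x i₀).valuation).toNat) := by
    rw [hval, ← zpow_natCast, Int.toNat_of_nonneg hvpos]
  refine ⟨(-(x i₀).valuation).toNat,
    backward _ ⟨fun i => by rw [← hCr]; exact hCle i, ⟨i₀, hCr⟩⟩, ?_⟩
  intro s hs
  obtain ⟨hsle, i₂, hi₂⟩ := forward s hs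
  have h1 : (p:ℝ)^s ≤ (p:ℝ)^((-(x i₀).valuation).toNat) := by
    rw [← hi₂, ← hCr]
    exact hCle i₂
  have h2 : (p:ℝ)^((-(x i₀).valuation).toNat) ≤ (p:ℝ)^s := by
    rw [← hCr]
    exact hsle i₀
  rcases lt_trichotomy s ((-(x i₀).valuation).toNat) with hlt|heq|hgt
  · exact absurd (pow_lt_pow_right₀ hp1 hlt) (not_lt.2 h2)
  · exact heq
  · exact absurd (pow_lt_pow_right₀ hp1 hgt) (not_lt.2 h1)

end
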